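/- Let Ω be an unbounded domain in a complex Banach space such that liminf_{z→∞, w→b} l_Ω(z, w) > 0 for all b ∈ Ω. Then Ω is hyperbolic, i.e., the Kobayashi pseudo-distance k_Ω is a distance defining the topology of Ω. -/

import Mathlib

open Filter Metric Set Topology MeasureTheory

/-- The Lempert function of a domain `Ω` in a complex Banach space. -/
noncomputable def lempert {E : Type*} [NormedAddCommGroup E] [NormedSpace ℂ E]
    (Ω : Set E) (z w : E) : ℝ :=
  sInf {r : ℝ | ∃ (f : ℂ → E) (l : ℂ), DifferentiableOn ℂ f (ball 0 1) ∧
    MapsTo f (ball 0 1) Ω ∧ f 0 = z ∧ f l = w ∧ l ∈ ball (0:ℂ) 1 ∧ r = ‖l‖}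

/-- The Poincaré distance from `0` to a point at "radius" `r`. -/
noncomputable def poincareDist (r : ℝ) : ℝ := (1/2) * Real.log ((1+r)/(1-r))

/-- The Kobayashi pseudo-distance of a domain `Ω`, defined via chains. -/
noncomputable def kobayashi {E : Type*} [NormedAddCommGroup E] [NormedSpace ℂ E]
    (Ω : Set E) (z w : E) : ℝ :=
  sInf {r : ℝ | ∃ (n : ℕ) (c : ℕ → E), c 0 = z ∧ c n = w ∧ (∀ i, i ≤ n → c i ∈ Ω) ∧
    r = ∑ i ∈ Finset.range n, poincareDist (lempert Ω (c i) (c (i+1)))}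

/-- `Ω` is (Kobayashi) hyperbolic: `kobayashi Ω` is a distance defining the norm topology. -/
def IsHyperbolic {E : Type*} [NormedAddCommGroup E] [NormedSpace ℂ E] (Ω : Set E) : Prop :=
  (∀ z ∈ Ω, ∀ w ∈ Ω, kobayashi Ω z w = 0 → z = w) ∧
  (∀ z ∈ Ω, ∀ ε > 0, ∃ δ > 0, ∀ w ∈ Ω, kobayashi Ω z w < δ → ‖w - z‖ < ε) ∧
  (∀ z ∈ Ω, ∀ ε > 0, ∃ δ > 0, ∀ w ∈ Ω, ‖w - z‖ < δ → kobayashi Ω z w < ε)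

/-- A sequence in `Ω` which is Cauchy for the Kobayashi pseudo-distance. -/
def KCauchy {E : Type*} [NormedAddCommGroup E] [NormedSpace ℂ E]
    (Ω : Set E) (x : ℕ → E) : Prop :=
  ∀ ε > 0, ∃ N, ∀ m ≥ N, ∀ n ≥ N, kobayashi Ω (x m) (x n) < ε

/-- `Ω` is complete hyperbolic. -/
def IsCompleteHyperbolic {E : Type*} [NormedAddCommGroup E] [NormedSpace ℂ E]
    (Ω : Set E) : Prop :=
  IsHyperbolic Ω ∧ ∀ x : ℕ → E, (∀ n, x n ∈ Ω) → KCauchy Ω x →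
    ∃ p ∈ Ω, Tendsto x atTop (nhds p)

/-- The filter of neighborhoods of `∞` (traces on `Ω` taken by `⊓ 𝓟 Ω` where needed). -/
noncomputable def atInfFilter (E : Type*) [NormedAddCommGroup E] : Filter E :=
  Filter.comap (fun z : E => ‖z‖) Filter.atTop

/-- The boundary point described by the filter `l` (either `𝓝 a` for `a ∈ ∂Ω`, or the
filter at `∞`) is a `k'`-point of `Ω`: no `k_Ω`-Cauchy sequence of `Ω` converges to it. -/
def KPrimeAt {E : Type*} [NormedAddCommGroup E] [NormedSpace ℂ E]
    (Ω : Set E) (l : Filter E) : Prop :=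
  ¬ ∃ x : ℕ → E, (∀ n, x n ∈ Ω) ∧ KCauchy Ω x ∧ Tendsto x atTop l

/-- A real-valued function is subharmonic on `U ⊆ ℂ`: upper semicontinuous and
satisfying the sub-mean-value inequality on closed disks contained in `U`. -/
def SubharmonicOnR (v : ℂ → ℝ) (U : Set ℂ) : Prop :=
  UpperSemicontinuousOn v U ∧ ∀ c : ℂ, ∀ r : ℝ, 0 < r → closedBall c r ⊆ U →
    v c ≤ (2 * Real.pi)⁻¹ *
      ∫ θ in (0:ℝ)..(2*Real.pi), v (c + (r : ℂ) * Complex.exp (θ * Complex.I))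

/-- Plurisubharmonicity on a domain of a complex Banach space. -/
def PlurisubharmonicOn {E : Type*} [NormedAddCommGroup E] [NormedSpace ℂ E]
    (u : E → ℝ) (Ω : Set E) : Prop :=
  UpperSemicontinuousOn u Ω ∧
    ∀ a b : E, SubharmonicOnR (fun t => u (a + t • b)) {t : ℂ | a + t • b ∈ Ω}

namespace HypAux
variable {E : Type*} [NormedAddCommGroup E] [NormedSpace ℂ E]

def LSet (Ω : Set E) (z w : E) : Set ℝ :=
  {r : ℝ | ∃ (f : ℂ → E) (l : ℂ), DifferentiableOn ℂ f (ball 0 1) ∧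
    MapsTo f (ball 0 1) Ω ∧ f 0 = z ∧ f l = w ∧ l ∈ ball (0:ℂ) 1 ∧ r = ‖l‖}

lemma lempert_eq (Ω : Set E) (z w : E) : lempert Ω z w = sInf (LSet Ω z w) := rfl

lemma LSet_bddBelow (Ω : Set E) (z w : E) : BddBelow (LSet Ω z w) := by
  refine ⟨0, fun r hr => ?_⟩
  obtain ⟨f, l, _, _, _, _, _, rfl⟩ := hr
  exact norm_nonneg _

lemma lempert_nonneg (Ω : Set E) (z w : E) : 0 ≤ lempert Ω z w := by
  rw [lempert_eq]
  refine Real.sInf_nonneg fun r hr => ?_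
  obtain ⟨f, l, _, _, _, _, _, rfl⟩ := hr
  exact norm_nonneg _

lemma lempert_le {Ω : Set E} {z w : E} {f : ℂ → E} {l : ℂ}
    (hd : DifferentiableOn ℂ f (ball 0 1)) (hm : MapsTo f (ball 0 1) Ω)
    (h0 : f 0 = z) (hl : f l = w) (hlb : l ∈ ball (0:ℂ) 1) :
    lempert Ω z w ≤ ‖l‖ := by
  rw [lempert_eq]
  exact csInf_le (LSet_bddBelow Ω z w) ⟨f, l, hd, hm, h0, hl, hlb, rfl⟩

lemma lempert_lt_one (Ω : Set E) (z w : E) : lempert Ω z w < 1 := by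
  rcases eq_empty_or_nonempty (LSet Ω z w) with h | ⟨r, hr⟩
  · rw [lempert_eq, h, Real.sInf_empty]; norm_num
  · obtain ⟨f, l, hd, hm, h0, hl, hlb, rfl⟩ := hr
    exact lt_of_le_of_lt (lempert_le hd hm h0 hl hlb) (by simpa using hlb)

lemma poincare_nonneg {r : ℝ} (h0 : 0 ≤ r) (h1 : r < 1) : 0 ≤ poincareDist r := by
  have : (1:ℝ) ≤ (1+r)/(1-r) := by
    rw [le_div_iff₀ (by linarith)]; linarith
  have := Real.log_nonneg this
  unfold poincareDist; linarith

lemma poincare_ge {r : ℝ} (h0 : 0 ≤ r) (h1 : r < 1) : r / 3 ≤ poincareDist r := by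
  have h2 : (0:ℝ) < 1 + 2*r := by linarith
  have step1 : Real.log (1 + 2*r) ≤ Real.log ((1+r)/(1-r)) := by
    apply Real.log_le_log h2
    rw [le_div_iff₀ (by linarith)]; nlinarith
  have step2 : 1 - 1/(1+2*r) ≤ Real.log (1 + 2*r) := by
    have := Real.log_le_sub_one_of_pos (x := 1/(1+2*r)) (by positivity)
    rw [Real.log_div one_ne_zero (by positivity), Real.log_one] at this
    linarith
  have step3 : 2*r/3 ≤ 1 - 1/(1+2*r) := by
    have : 1/(1+2*r) ≤ 1 - 2*r/3 := by
      rw [div_le_iff₀ h2]; nlinarith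
    linarith
  unfold poincareDist; linarith

lemma poincare_le {r : ℝ} (h0 : 0 ≤ r) (h1 : r ≤ 1/2) : poincareDist r ≤ 2*r := by
  have hpos : (0:ℝ) < (1+r)/(1-r) := by
    apply div_pos <;> linarith
  have := Real.log_le_sub_one_of_pos hpos
  have h2 : (1+r)/(1-r) - 1 ≤ 4*r := by
    rw [div_sub_one (by linarith : (1:ℝ) - r ≠ 0), div_le_iff₀ (by linarith : (0:ℝ) < 1 - r)]
    nlinarith
  unfold poincareDist; linarith


noncomputable def mob (τ s : ℂ) : ℂ := (τ - s) / (1 - (starRingEnd ℂ) τ * s)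

lemma mob_denom_ne {τ s : ℂ} (hτ : ‖τ‖ < 1) (hs : ‖s‖ < 1) :
    1 - (starRingEnd ℂ) τ * s ≠ 0 := by
  intro h
  rw [sub_eq_zero] at h
  have : ‖(starRingEnd ℂ) τ * s‖ < 1 := by
    rw [norm_mul, RCLike.norm_conj]
    nlinarith [norm_nonneg τ, norm_nonneg s]
  rw [← h] at this; simp at this

lemma mob_zero (τ : ℂ) : mob τ 0 = τ := by simp [mob]

lemma mob_self (τ : ℂ) : mob τ τ = 0 := by simp [mob]

lemma mob_norm_lt {τ s : ℂ} (hτ : ‖τ‖ < 1) (hs : ‖s‖ < 1) : ‖mob τ s‖ < 1 := by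
  have hne := mob_denom_ne hτ hs
  rw [mob, norm_div, div_lt_one (norm_pos_iff.mpr hne)]
  have e : Complex.normSq (1 - (starRingEnd ℂ) τ * s) - Complex.normSq (τ - s)
      = (1 - Complex.normSq τ) * (1 - Complex.normSq s) := by
    simp only [Complex.normSq_apply, Complex.sub_re, Complex.sub_im, Complex.mul_re,
      Complex.mul_im, Complex.conj_re, Complex.conj_im, Complex.one_re, Complex.one_im]
    ring
  have n1 : Complex.normSq τ = ‖τ‖^2 := by rw [Complex.sq_norm]
  have n2 : Complex.normSq s = ‖s‖^2 := by rw [Complex.sq_norm]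
  have n3 : Complex.normSq (τ - s) = ‖τ - s‖^2 := by rw [Complex.sq_norm]
  have n4 : Complex.normSq (1 - (starRingEnd ℂ) τ * s) = ‖1 - (starRingEnd ℂ) τ * s‖^2 := by
    rw [Complex.sq_norm]
  rw [n1, n2, n3, n4] at e
  have t1 : ‖τ‖^2 < 1 := by nlinarith [norm_nonneg τ]
  have t2 : ‖s‖^2 < 1 := by nlinarith [norm_nonneg s]
  have key : ‖τ - s‖^2 < ‖1 - (starRingEnd ℂ) τ * s‖^2 := by nlinarith
  exact lt_of_pow_lt_pow_left₀ 2 (norm_nonneg _) key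

lemma mob_mapsTo {τ : ℂ} (hτ : ‖τ‖ < 1) : MapsTo (mob τ) (ball 0 1) (ball 0 1) :=
  fun s hs => mem_ball_zero_iff.mpr (mob_norm_lt hτ (mem_ball_zero_iff.mp hs))

lemma mob_diff {τ : ℂ} (hτ : ‖τ‖ < 1) : DifferentiableOn ℂ (mob τ) (ball 0 1) := by
  intro s hs
  have hs' : ‖s‖ < 1 := mem_ball_zero_iff.mp hs
  apply DifferentiableAt.differentiableWithinAt
  unfold mob
  apply DifferentiableAt.div
  · fun_prop
  · fun_prop
  · exact mob_denom_ne hτ hs'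

lemma lempert_localization {Ω : Set E} {b : E} {c ρ R : ℝ}
    (hc0 : 0 < c) (hc1 : c ≤ 1/2) (hρ : 0 < ρ) (hRb : ‖b‖ + ρ ≤ R)
    (hyp : ∀ z ∈ Ω, R ≤ ‖z‖ → ∀ w ∈ Ω, ‖w - b‖ < ρ → c ≤ lempert Ω z w)
    (hne : ∀ z ∈ Ω, ∀ w ∈ Ω, (LSet Ω z w).Nonempty)
    {w z : E} (hw : w ∈ Ω) (hwb : ‖w - b‖ < ρ) (hz : z ∈ Ω) :
    min c (c * ‖z - w‖ / (2*R)) ≤ lempert Ω w z := by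
  have hR0 : 0 < R := lt_of_lt_of_le (by positivity) hRb
  rw [lempert_eq]
  apply le_csInf (hne w hw z hz)
  rintro r ⟨f, l, hd, hm, h0, hl, hlb, rfl⟩
  have claim : ∀ τ : ℂ, ‖τ‖ < c → ‖f τ‖ < R := by
    intro τ hτc
    by_contra hge
    push_neg at hge
    have hτ1 : ‖τ‖ < 1 := hτc.trans_le (by linarith)
    have hτb : τ ∈ ball (0:ℂ) 1 := mem_ball_zero_iff.mpr hτ1
    have hg : lempert Ω (f τ) w ≤ ‖τ‖ := by
      apply lempert_le (f := f ∘ mob τ) (l := τ)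
      · exact hd.comp (mob_diff hτ1) (mob_mapsTo hτ1)
      · exact hm.comp (mob_mapsTo hτ1)
      · simp only [Function.comp_apply, mob_zero]
      · simp only [Function.comp_apply, mob_self]; exact h0
      · exact hτb
    have := hyp (f τ) (hm hτb) hge w hw hwb
    linarith
  rcases lt_or_ge ‖l‖ c with hlc | hlc
  · have hfw : ‖f 0‖ < R := by
      rw [h0]
      calc ‖w‖ = ‖b + (w - b)‖ := by rw [show b + (w - b) = w by abel]
        _ ≤ ‖b‖ + ‖w - b‖ := norm_add_le _ _
        _ < R := by linarith
    have hmaps : MapsTo f (ball (0:ℂ) c) (ball (f 0) (2*R)) := by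
      intro τ hτ
      have hτc : ‖τ‖ < c := mem_ball_zero_iff.mp hτ
      have h1 : ‖f τ‖ < R := claim τ hτc
      rw [mem_ball, dist_eq_norm]
      calc ‖f τ - f 0‖ ≤ ‖f τ‖ + ‖f 0‖ := norm_sub_le _ _
        _ < 2*R := by linarith
    have hd' : DifferentiableOn ℂ f (ball 0 c) :=
      hd.mono (ball_subset_ball (by linarith))
    have hS := Complex.dist_le_div_mul_dist_of_mapsTo_ball hd' (hmaps.mono_right ball_subset_closedBall)
      (mem_ball_zero_iff.mpr hlc)
    rw [hl, h0, dist_eq_norm, dist_zero_right] at hS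
    have : c * ‖z - w‖ / (2*R) ≤ ‖l‖ := by
      rw [div_le_iff₀ (by positivity)]
      have h2 : c * ‖z - w‖ ≤ c * (2 * R / c * ‖l‖) :=
        mul_le_mul_of_nonneg_left hS (le_of_lt hc0)
      calc c * ‖z - w‖ ≤ c * (2 * R / c * ‖l‖) := h2
        _ = ‖l‖ * (2*R) := by field_simp
    exact le_trans (min_le_right _ _) this
  · exact le_trans (min_le_left _ _) hlc

lemma min_add_min {m a b : ℝ} (hm : 0 ≤ m) (ha : 0 ≤ a) (hb : 0 ≤ b) :
    min m (a + b) ≤ min m a + min m b := by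
  rcases le_total m a with h | h
  · calc min m (a+b) ≤ m := min_le_left _ _
      _ = min m a + 0 := by rw [min_eq_left h, add_zero]
      _ ≤ min m a + min m b := by gcongr; exact le_min hm hb
  · rcases le_total m b with h' | h'
    · calc min m (a+b) ≤ m := min_le_left _ _
        _ = 0 + min m b := by rw [min_eq_left h', zero_add]
        _ ≤ min m a + min m b := by gcongr; exact le_min hm ha
    · rw [min_eq_right h, min_eq_right h']
      exact min_le_right _ _

lemma chain_lower {Ω : Set E} {b : E} {c ρ R : ℝ}
    (hc0 : 0 < c) (hρ : 0 < ρ) (hR0 : 0 < R)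
    (hloc : ∀ w ∈ Ω, ‖w - b‖ < ρ → ∀ z ∈ Ω, min c (c * ‖z - w‖ / (2*R)) ≤ lempert Ω w z) :
    ∀ n : ℕ, ∀ ch : ℕ → E, ch 0 = b → (∀ i, i ≤ n → ch i ∈ Ω) →
      c/(6*R) * min (min ρ (2*R)) ‖ch n - b‖ ≤
        ∑ i ∈ Finset.range n, poincareDist (lempert Ω (ch i) (ch (i+1))) := by
  intro n
  set m0 := min ρ (2*R) with hm0def
  have hm0 : 0 < m0 := lt_min hρ (by positivity)
  have hC : 0 < c/(6*R) := by positivity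
  induction n with
  | zero =>
    intro ch h0 _
    simp [h0, le_of_lt hm0]
  | succ n ih =>
    intro ch h0 hmem
    have hmem' : ∀ i, i ≤ n → ch i ∈ Ω := fun i hi => hmem i (hi.trans (Nat.le_succ n))
    have IH := ih ch h0 hmem'
    rw [Finset.sum_range_succ]
    have hL0 : 0 ≤ lempert Ω (ch n) (ch (n+1)) := lempert_nonneg _ _ _
    have hL1 : lempert Ω (ch n) (ch (n+1)) < 1 := lempert_lt_one _ _ _
    have hp0 : 0 ≤ poincareDist (lempert Ω (ch n) (ch (n+1))) := poincare_nonneg hL0 hL1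
    rcases le_or_gt ρ ‖ch n - b‖ with hcase | hcase
    · have h1 : min m0 ‖ch n - b‖ = m0 := min_eq_left (le_trans (min_le_left _ _) hcase)
      have h2 : min m0 ‖ch (n+1) - b‖ ≤ m0 := min_le_left _ _
      nlinarith
    · have hle := hloc (ch n) (hmem' n le_rfl) hcase (ch (n+1)) (hmem (n+1) le_rfl)
      have hp : c/(6*R) * min m0 ‖ch (n+1) - ch n‖ ≤
          poincareDist (lempert Ω (ch n) (ch (n+1))) := by
        have h3 := poincare_ge hL0 hL1
        have h4 : min c (c * ‖ch (n+1) - ch n‖ / (2*R)) =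
            c/(2*R) * min (2*R) ‖ch (n+1) - ch n‖ := by
          rw [mul_min_of_nonneg _ _ (by positivity : (0:ℝ) ≤ c/(2*R))]
          congr 1
          · field_simp
          · field_simp
        have h5 : c/(2*R) * min m0 ‖ch (n+1) - ch n‖ ≤
            c/(2*R) * min (2*R) ‖ch (n+1) - ch n‖ :=
          mul_le_mul_of_nonneg_left (min_le_min (min_le_right _ _) le_rfl) (by positivity)
        rw [h4] at hle
        calc c/(6*R) * min m0 ‖ch (n+1) - ch n‖
            = (c/(2*R) * min m0 ‖ch (n+1) - ch n‖)/3 := by ring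
          _ ≤ (c/(2*R) * min (2*R) ‖ch (n+1) - ch n‖)/3 := by linarith
          _ ≤ lempert Ω (ch n) (ch (n+1)) / 3 := by linarith
          _ ≤ poincareDist (lempert Ω (ch n) (ch (n+1))) := by
              rw [div_eq_mul_inv] at h3 ⊢
              linarith [h3]
      have htri : ‖ch (n+1) - b‖ ≤ ‖ch n - b‖ + ‖ch (n+1) - ch n‖ := by
        calc ‖ch (n+1) - b‖ = ‖(ch n - b) + (ch (n+1) - ch n)‖ := by
              rw [show (ch n - b) + (ch (n+1) - ch n) = ch (n+1) - b by abel]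
          _ ≤ ‖ch n - b‖ + ‖ch (n+1) - ch n‖ := norm_add_le _ _
      have hminmono : min m0 ‖ch (n+1) - b‖ ≤ min m0 (‖ch n - b‖ + ‖ch (n+1) - ch n‖) :=
        min_le_min le_rfl htri
      have hsplit := min_add_min (le_of_lt hm0) (norm_nonneg (ch n - b))
        (norm_nonneg (ch (n+1) - ch n))
      nlinarith [hminmono, hsplit, IH, hp]
def KSet (Ω : Set E) (z w : E) : Set ℝ :=
  {r : ℝ | ∃ (n : ℕ) (c : ℕ → E), c 0 = z ∧ c n = w ∧ (∀ i, i ≤ n → c i ∈ Ω) ∧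
    r = ∑ i ∈ Finset.range n, poincareDist (lempert Ω (c i) (c (i+1)))}

lemma kobayashi_eq (Ω : Set E) (z w : E) : kobayashi Ω z w = sInf (KSet Ω z w) := rfl

lemma KSet_nonempty {Ω : Set E} {z w : E} (hz : z ∈ Ω) (hw : w ∈ Ω) :
    (KSet Ω z w).Nonempty := by
  refine ⟨poincareDist (lempert Ω z w), 1, fun i => if i = 0 then z else w, ?_, ?_, ?_, ?_⟩
  · simp
  · simp
  · intro i _
    by_cases h : i = 0 <;> simp [h, hz, hw]
  · simp

lemma KSet_elem_nonneg {Ω : Set E} {z w : E} {r : ℝ} (hr : r ∈ KSet Ω z w) : 0 ≤ r := by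
  obtain ⟨n, ch, _, _, _, rfl⟩ := hr
  apply Finset.sum_nonneg
  intro i _
  exact poincare_nonneg (lempert_nonneg _ _ _) (lempert_lt_one _ _ _)

lemma KSet_bddBelow (Ω : Set E) (z w : E) : BddBelow (KSet Ω z w) :=
  ⟨0, fun _ hr => KSet_elem_nonneg hr⟩

lemma extract {Ω : Set E} {b : E}
    (h : ∃ c > (0:ℝ), ∀ᶠ p : E × E in (atInfFilter E ⊓ Filter.principal Ω) ×ˢ (nhdsWithin b Ω),
        c ≤ lempert Ω p.1 p.2) :
    ∃ c > (0:ℝ), ∃ R : ℝ, ∃ ρ > (0:ℝ),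
      ∀ z ∈ Ω, R ≤ ‖z‖ → ∀ w ∈ Ω, ‖w - b‖ < ρ → c ≤ lempert Ω z w := by
  obtain ⟨c, hc, hev⟩ := h
  rw [Filter.eventually_prod_iff] at hev
  obtain ⟨pa, hpa, pb, hpb, himp⟩ := hev
  rw [Filter.eventually_inf_principal] at hpa
  rw [atInfFilter, Filter.eventually_comap, Filter.eventually_atTop] at hpa
  obtain ⟨R, hR⟩ := hpa
  rw [Filter.Eventually, Metric.mem_nhdsWithin_iff] at hpb
  obtain ⟨ρ, hρ, hρ'⟩ := hpb
  refine ⟨c, hc, R, ρ, hρ, fun z hz hRz w hw hwb => ?_⟩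
  have h1 : pa z := hR ‖z‖ hRz z rfl hz
  have h2 : pb w := hρ' ⟨by rw [mem_ball, dist_eq_norm]; exact hwb, hw⟩
  exact himp h1 h2

lemma kobayashi_lower {Ω : Set E}
    (hne : ∀ z ∈ Ω, ∀ w ∈ Ω, (LSet Ω z w).Nonempty) {b : E} (hb : b ∈ Ω)
    (hext : ∃ c > (0:ℝ), ∃ R : ℝ, ∃ ρ > (0:ℝ),
      ∀ z ∈ Ω, R ≤ ‖z‖ → ∀ w ∈ Ω, ‖w - b‖ < ρ → c ≤ lempert Ω z w) :
    ∃ C > (0:ℝ), ∃ m0 > (0:ℝ), ∀ w ∈ Ω, C * min m0 ‖w - b‖ ≤ kobayashi Ω b w := by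
  obtain ⟨c, hc, R, ρ, hρ, hyp⟩ := hext
  set c' := min c (1/2) with hc'def
  have hc'0 : 0 < c' := lt_min hc (by norm_num)
  have hc'1 : c' ≤ 1/2 := min_le_right _ _
  set R' := max R (‖b‖ + ρ) with hR'def
  have hRb : ‖b‖ + ρ ≤ R' := le_max_right _ _
  have hR'0 : 0 < R' := lt_of_lt_of_le (by positivity) hRb
  have hyp' : ∀ z ∈ Ω, R' ≤ ‖z‖ → ∀ w ∈ Ω, ‖w - b‖ < ρ → c' ≤ lempert Ω z w :=
    fun z hz hRz w hw hwb =>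
      le_trans (min_le_left _ _) (hyp z hz (le_trans (le_max_left _ _) hRz) w hw hwb)
  have hloc : ∀ w ∈ Ω, ‖w - b‖ < ρ → ∀ z ∈ Ω,
      min c' (c' * ‖z - w‖ / (2*R')) ≤ lempert Ω w z :=
    fun w hw hwb z hz => lempert_localization hc'0 hc'1 hρ hRb hyp' hne hw hwb hz
  refine ⟨c'/(6*R'), by positivity, min ρ (2*R'), lt_min hρ (by positivity), fun w hw => ?_⟩
  rw [kobayashi_eq]
  apply le_csInf (KSet_nonempty hb hw)
  rintro r ⟨n, ch, h0, hn, hmem, rfl⟩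
  have := chain_lower hc'0 hρ hR'0 hloc n ch h0 hmem
  rw [hn] at this
  exact this

lemma kobayashi_le_poincare {Ω : Set E} {z w : E} (hz : z ∈ Ω) (hw : w ∈ Ω) :
    kobayashi Ω z w ≤ poincareDist (lempert Ω z w) := by
  rw [kobayashi_eq]
  apply csInf_le (KSet_bddBelow Ω z w)
  exact ⟨1, fun i => if i = 0 then z else w, by simp, by simp, by
    intro i _; by_cases h : i = 0 <;> simp [h, hz, hw], by simp⟩

lemma lempert_le_of_ball {Ω : Set E} {z w : E} {ρ' : ℝ} (hρ' : 0 < ρ')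
    (hball : ball z ρ' ⊆ Ω) (hwz : ‖w - z‖ < ρ') :
    lempert Ω z w ≤ ‖w - z‖ / ρ' := by
  rcases eq_or_ne w z with rfl | hne
  · simp only [sub_self, norm_zero, zero_div]
    have h := lempert_le (Ω := Ω) (f := fun _ => w) (l := 0)
      (differentiableOn_const w) (fun t _ => hball (mem_ball_self hρ')) rfl rfl
      (mem_ball_self one_pos)
    simpa using h
  · have hwz0 : 0 < ‖w - z‖ := norm_pos_iff.mpr (sub_ne_zero.mpr hne)
    set f : ℂ → E := fun t => z + (t * ((ρ' : ℂ) / (‖w - z‖ : ℝ))) • (w - z) with hfdef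
    have hl1 : ‖((‖w - z‖ / ρ' : ℝ) : ℂ)‖ < 1 := by
      rw [Complex.norm_real, Real.norm_eq_abs, abs_of_nonneg (by positivity)]
      rw [div_lt_one hρ']
      exact hwz
    have key : ∀ t : ℂ, ‖t‖ < 1 → ‖f t - z‖ < ρ' := by
      intro t ht
      simp only [hfdef, add_sub_cancel_left, norm_smul, norm_mul, norm_div,
        Complex.norm_real, Real.norm_eq_abs, abs_of_nonneg (le_of_lt hρ'),
        abs_of_nonneg (norm_nonneg (w - z))]
      rw [mul_assoc, div_mul_cancel₀ _ (ne_of_gt hwz0)]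
      nlinarith
    have hnorm : ‖((‖w - z‖ / ρ' : ℝ) : ℂ)‖ = ‖w - z‖ / ρ' := by
      rw [Complex.norm_real, Real.norm_eq_abs, abs_of_nonneg (by positivity)]
    rw [← hnorm]
    apply lempert_le (f := f) (l := ((‖w - z‖ / ρ' : ℝ) : ℂ))
    · apply DifferentiableOn.add (differentiableOn_const z)
      apply DifferentiableOn.smul _ (differentiableOn_const (w - z))
      fun_prop
    · intro t ht
      exact hball (mem_ball_iff_norm.mpr (key t (mem_ball_zero_iff.mp ht)))
    · simp [hfdef]
    · simp only [hfdef]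
      have : ((‖w - z‖ / ρ' : ℝ) : ℂ) * ((ρ' : ℂ) / (‖w - z‖ : ℝ)) = 1 := by
        have h1 : ((‖w - z‖ : ℝ) : ℂ) ≠ 0 := by
          exact_mod_cast ne_of_gt hwz0
        have h2 : ((ρ' : ℝ) : ℂ) ≠ 0 := by exact_mod_cast ne_of_gt hρ'
        push_cast
        field_simp
      rw [this, one_smul]
      abel
    · exact mem_ball_zero_iff.mpr hl1
lemma bernstein_vec {g : unitInterval → E} (hg : Continuous g) {ε : ℝ} (hε : 0 < ε) :
    ∃ n : ℕ, 0 < n ∧ ∀ x : unitInterval,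
      ‖(∑ k : Fin (n+1), bernstein n k x • g (bernstein.z k)) - g x‖ ≤ ε := by
  obtain ⟨d, hd, hmod⟩ := Metric.uniformContinuous_iff.mp
    (CompactSpace.uniformContinuous_of_continuous hg) (ε/2) (half_pos hε)
  obtain ⟨M, hM⟩ := (isCompact_range hg).isBounded.exists_norm_le
  have hM0 : 0 ≤ M := le_trans (norm_nonneg _) (hM (g 0) (mem_range_self _))
  obtain ⟨n, hn⟩ := exists_nat_ge (4*M/(ε*d^2) + 1)
  have hn0 : 0 < n := by
    by_contra h
    push_neg at h
    interval_cases n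
    · simp at hn
      nlinarith [div_nonneg (by nlinarith : (0:ℝ) ≤ 4*M) (by positivity : (0:ℝ) ≤ ε*d^2)]
  have hnR : 0 < (n:ℝ) := Nat.cast_pos.mpr hn0
  refine ⟨n, hn0, fun x => ?_⟩
  have hsum : (∑ k : Fin (n+1), bernstein n k x) = 1 := bernstein.probability n x
  have e1 : (∑ k : Fin (n+1), bernstein n k x • g (bernstein.z k)) - g x
      = ∑ k : Fin (n+1), bernstein n k x • (g (bernstein.z k) - g x) := by
    simp only [smul_sub, Finset.sum_sub_distrib, ← Finset.sum_smul, hsum, one_smul]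
  rw [e1]
  have e2 : ∀ k : Fin (n+1), ‖bernstein n k x • (g (bernstein.z k) - g x)‖ ≤
      bernstein n k x * (ε/2)
        + (2*M/d^2) * (((x:ℝ) - (bernstein.z k : ℝ))^2 * bernstein n k x) := by
    intro k
    rw [norm_smul, Real.norm_eq_abs, abs_of_nonneg bernstein_nonneg]
    have hb : (0:ℝ) ≤ bernstein n k x := bernstein_nonneg
    rcases lt_or_ge (dist (bernstein.z k) x) d with hlt | hge
    · have hterm : ‖g (bernstein.z k) - g x‖ ≤ ε/2 := by
        rw [← dist_eq_norm]
        exact le_of_lt (hmod hlt)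
      have hpos : 0 ≤ (2*M/d^2) * (((x:ℝ) - (bernstein.z k : ℝ))^2 * bernstein n k x) := by
        positivity
      nlinarith
    · have h2M : ‖g (bernstein.z k) - g x‖ ≤ 2*M := by
        calc ‖g (bernstein.z k) - g x‖ ≤ ‖g (bernstein.z k)‖ + ‖g x‖ := norm_sub_le _ _
          _ ≤ M + M := add_le_add (hM _ (mem_range_self _)) (hM _ (mem_range_self _))
          _ = 2*M := by ring
      have hd2 : d^2 ≤ ((x:ℝ) - (bernstein.z k : ℝ))^2 := by
        have habs : d ≤ |(x:ℝ) - (bernstein.z k : ℝ)| := by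
          rw [dist_comm, Subtype.dist_eq, Real.dist_eq] at hge
          exact hge
        nlinarith [abs_nonneg ((x:ℝ) - (bernstein.z k : ℝ)), sq_abs ((x:ℝ) - (bernstein.z k : ℝ))]
      have hkey : bernstein n k x * ‖g (bernstein.z k) - g x‖ ≤
          (2*M/d^2) * (((x:ℝ) - (bernstein.z k : ℝ))^2 * bernstein n k x) := by
        have h1 : bernstein n k x * ‖g (bernstein.z k) - g x‖ ≤ bernstein n k x * (2*M) :=
          mul_le_mul_of_nonneg_left h2M hb
        have h2 : (2*M/d^2) * (d^2 * bernstein n k x) = bernstein n k x * (2*M) := by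
          field_simp
        have h3 : (2*M/d^2) * (d^2 * bernstein n k x) ≤
            (2*M/d^2) * (((x:ℝ) - (bernstein.z k : ℝ))^2 * bernstein n k x) :=
          mul_le_mul_of_nonneg_left (by nlinarith) (by positivity)
        linarith
      nlinarith
  calc ‖∑ k : Fin (n+1), bernstein n k x • (g (bernstein.z k) - g x)‖
      ≤ ∑ k : Fin (n+1), ‖bernstein n k x • (g (bernstein.z k) - g x)‖ :=
        norm_sum_le _ _
    _ ≤ ∑ k : Fin (n+1), (bernstein n k x * (ε/2)
          + (2*M/d^2) * (((x:ℝ) - (bernstein.z k : ℝ))^2 * bernstein n k x)) :=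
        Finset.sum_le_sum (fun k _ => e2 k)
    _ = (∑ k : Fin (n+1), bernstein n k x) * (ε/2)
          + (2*M/d^2) * (∑ k : Fin (n+1), ((x:ℝ) - (bernstein.z k : ℝ))^2 * bernstein n k x) := by
        rw [Finset.sum_add_distrib, ← Finset.sum_mul, ← Finset.mul_sum]
    _ = ε/2 + (2*M/d^2) * ((x:ℝ) * (1 - (x:ℝ)) / n) := by
        rw [hsum, bernstein.variance hn0.ne', one_mul]
    _ ≤ ε := by
        have hx0 : 0 ≤ (x:ℝ) := x.2.1
        have hx1 : (x:ℝ) ≤ 1 := x.2.2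
        have hxx : (x:ℝ) * (1 - (x:ℝ)) ≤ 1 := by nlinarith
        have hxx0 : 0 ≤ (x:ℝ) * (1 - (x:ℝ)) := by nlinarith
        have e : (2*M/d^2) * ((x:ℝ) * (1 - (x:ℝ)) / n) =
            2*M*((x:ℝ) * (1 - (x:ℝ)))/(d^2*n) := by
          rw [div_mul_div_comm]
        have hfrac : (2*M/d^2) * ((x:ℝ) * (1 - (x:ℝ)) / n) ≤ ε/2 := by
          rw [e, div_le_iff₀ (by positivity)]
          have h5 : (4*M/(ε*d^2))*(ε*d^2) = 4*M := by field_simp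
          have h6 : (4*M/(ε*d^2) + 1)*(ε*d^2) ≤ (n:ℝ)*(ε*d^2) := by
            apply mul_le_mul_of_nonneg_right hn (by positivity)
          nlinarith [mul_le_mul_of_nonneg_left hxx (by linarith : (0:ℝ) ≤ 2*M)]
        linarith

lemma exp_sub_one_le {y : ℝ} (h0 : 0 ≤ y) (h1 : y ≤ 1/2) : Real.exp y - 1 ≤ 2*y := by
  have h2 := Real.add_one_le_exp (-y)
  have h3 : Real.exp y * Real.exp (-y) = 1 := by
    rw [← Real.exp_add]; simp
  nlinarith [Real.exp_pos y]

lemma strip_map {η : ℝ} (hη : 0 < η) :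
    ∃ (φ : ℂ → ℂ) (t₁ : ℝ), DifferentiableOn ℂ φ (ball 0 1) ∧ 0 < t₁ ∧ t₁ < 1 ∧
      φ 0 = 0 ∧ φ ((t₁:ℝ):ℂ) = 1 ∧
      ∀ s ∈ ball (0:ℂ) 1, ∃ u : ℝ, 0 ≤ u ∧ u ≤ 1 ∧ dist (φ s) ((u:ℝ):ℂ) < η := by
  set y₀ : ℝ := min (η/4) (1/2) with hy₀def
  have hy₀ : 0 < y₀ := lt_min (by positivity) (by norm_num)
  have hy₀half : y₀ ≤ 1/2 := min_le_right _ _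
  have hy₀η : y₀ ≤ η/4 := min_le_left _ _
  set σ : ℝ := y₀ * 2 / Real.pi with hσdef
  have hσ : 0 < σ := by
    apply div_pos (by linarith) Real.pi_pos
  set Mf : ℂ → ℂ := fun s => (1+s)/(1-s) with hMdef
  have hMne : ∀ s ∈ ball (0:ℂ) 1, (1:ℂ) - s ≠ 0 := by
    intro s hs h
    rw [sub_eq_zero] at h
    rw [mem_ball_zero_iff, ← h] at hs
    simp at hs
  have hMre : ∀ s ∈ ball (0:ℂ) 1, 0 < (Mf s).re := by
    intro s hs
    have hs1 : ‖s‖ < 1 := mem_ball_zero_iff.mp hs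
    have hns : Complex.normSq s < 1 := by
      rw [← Complex.sq_norm]; nlinarith [norm_nonneg s]
    rw [hMdef]
    simp only [Complex.div_re, Complex.add_re, Complex.one_re, Complex.sub_re,
      Complex.add_im, Complex.one_im, Complex.sub_im]
    have hpos : 0 < Complex.normSq (1 - s) := Complex.normSq_pos.mpr (hMne s hs)
    rw [← add_div, lt_div_iff₀ hpos]
    rw [Complex.normSq_apply]
    ring_nf
    nlinarith [Complex.normSq_apply s ▸ hns]
  set ψ : ℂ → ℂ := fun s => (σ:ℂ) * Complex.log (Mf s) with hψdef
  set φ : ℂ → ℂ := fun s => (1 - Complex.cos (ψ s))/2 with hφdef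
  set X : ℝ := Real.exp (Real.pi/σ) with hXdef
  have hXpos : 0 < X := Real.exp_pos _
  have hX1 : 1 < X := by
    rw [hXdef, show (1:ℝ) = Real.exp 0 by simp]
    exact Real.exp_lt_exp.mpr (by positivity)
  set t₁ : ℝ := (X-1)/(X+1) with ht₁def
  have ht₁0 : 0 < t₁ := by apply div_pos <;> linarith
  have ht₁1 : t₁ < 1 := by
    rw [div_lt_one (by linarith)]; linarith
  have hdiff : DifferentiableOn ℂ φ (ball 0 1) := by
    intro s hs
    apply DifferentiableAt.differentiableWithinAt
    have h1 : DifferentiableAt ℂ Mf s := by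
      apply DifferentiableAt.div
      · fun_prop
      · fun_prop
      · exact hMne s hs
    have h2 : DifferentiableAt ℂ Complex.log (Mf s) :=
      Complex.differentiableAt_log (Complex.mem_slitPlane_iff.mpr (Or.inl (hMre s hs)))
    have h3 : DifferentiableAt ℂ (fun s => Complex.log (Mf s)) s := h2.comp s h1
    rw [hφdef]
    apply DifferentiableAt.div_const
    apply DifferentiableAt.sub (differentiableAt_const _)
    exact Complex.differentiable_cos.differentiableAt.comp s ((differentiableAt_const _).mul h3)
  have hφ0 : φ 0 = 0 := by
    simp only [hφdef, hψdef, hMdef]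
    norm_num
  have hφ1 : φ ((t₁:ℝ):ℂ) = 1 := by
    have h3 : (1+t₁ : ℝ) = X*(1-t₁) := by
      rw [ht₁def]
      have hX1' : X+1 ≠ 0 := by linarith
      field_simp
      ring
    have hMt : Mf ((t₁:ℝ):ℂ) = ((X:ℝ):ℂ) := by
      have h2 : ((1:ℂ) - (t₁:ℂ)) ≠ 0 := by
        intro h
        have := congrArg Complex.re h
        simp at this
        linarith
      rw [hMdef]
      show ((1:ℂ)+(t₁:ℂ))/((1:ℂ)-(t₁:ℂ)) = ((X:ℝ):ℂ)
      rw [div_eq_iff h2]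
      have h4 := congrArg (fun r : ℝ => (r:ℂ)) h3
      push_cast at h4
      linear_combination h4
    simp only [hφdef, hψdef]
    rw [hMt]
    rw [← Complex.ofReal_log (le_of_lt hXpos), hXdef, Real.log_exp]
    have hσ' : (σ:ℂ) ≠ 0 := by
      simp only [ne_eq, Complex.ofReal_eq_zero]
      exact ne_of_gt hσ
    have : (σ:ℂ) * ((Real.pi/σ : ℝ):ℂ) = (Real.pi:ℂ) := by
      push_cast
      field_simp
    rw [this, Complex.cos_pi]
    norm_num
  refine ⟨φ, t₁, hdiff, ht₁0, ht₁1, hφ0, hφ1, ?_⟩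
  intro s hs
  set ζ : ℂ := ψ s with hζdef
  set x : ℝ := ζ.re with hxdef
  set y : ℝ := ζ.im with hydef
  have hyb : |y| ≤ y₀ := by
    have h1 : y = σ * (Complex.log (Mf s)).im := by
      rw [hydef, hζdef, hψdef]
      simp [Complex.mul_im]
    have h2 : |(Complex.log (Mf s)).im| ≤ Real.pi/2 := by
      rw [Complex.log_im]
      exact Complex.abs_arg_le_pi_div_two_iff.mpr (le_of_lt (hMre s hs))
    rw [h1, abs_mul, abs_of_nonneg (le_of_lt hσ)]
    calc σ * |(Complex.log (Mf s)).im| ≤ σ * (Real.pi/2) :=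
        mul_le_mul_of_nonneg_left h2 (le_of_lt hσ)
      _ = y₀ := by
        rw [hσdef]
        field_simp
  refine ⟨(1 - Real.cos x)/2, by nlinarith [Real.cos_le_one x],
    by nlinarith [Real.neg_one_le_cos x], ?_⟩
  have hcos : Complex.cos ζ = (Real.cos x : ℂ) * (Real.cosh y : ℂ)
      - (Real.sin x : ℂ) * (Real.sinh y : ℂ) * Complex.I := by
    rw [Complex.cos_eq ζ]
    rw [← hxdef, ← hydef, Complex.ofReal_cos, Complex.ofReal_sin, Complex.ofReal_cosh,
      Complex.ofReal_sinh]
  have hdiff2 : φ s - (((1 - Real.cos x)/2 : ℝ):ℂ) =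
      ((Real.cos x * (1 - Real.cosh y) : ℝ):ℂ)/2
        + ((Real.sin x * Real.sinh y : ℝ):ℂ)/2 * Complex.I := by
    rw [hφdef]
    show (1 - Complex.cos ζ)/2 - _ = _
    rw [hcos]
    push_cast
    ring
  rw [dist_eq_norm, hdiff2]
  have hb1 : ‖((Real.cos x * (1 - Real.cosh y) : ℝ):ℂ)/2
      + ((Real.sin x * Real.sinh y : ℝ):ℂ)/2 * Complex.I‖
      ≤ |Real.cos x * (1 - Real.cosh y)|/2 + |Real.sin x * Real.sinh y|/2 := by
    calc ‖_ + _‖ ≤ ‖((Real.cos x * (1 - Real.cosh y) : ℝ):ℂ)/2‖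
        + ‖((Real.sin x * Real.sinh y : ℝ):ℂ)/2 * Complex.I‖ := norm_add_le _ _
      _ = |Real.cos x * (1 - Real.cosh y)|/2 + |Real.sin x * Real.sinh y|/2 := by
        rw [norm_mul, Complex.norm_I, mul_one, norm_div, norm_div,
          Complex.norm_real, Complex.norm_real,
          show ((2:ℂ)) = ((2:ℝ):ℂ) by norm_num, Complex.norm_real]
        norm_num [abs_mul]
  have hcoshy : Real.cosh y ≤ Real.cosh y₀ := by
    rw [Real.cosh_le_cosh]
    rw [abs_of_nonneg (le_of_lt hy₀)] at *
    exact hyb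
  have hsinhy : |Real.sinh y| ≤ Real.sinh y₀ := by
    rw [Real.abs_sinh]
    exact Real.sinh_le_sinh.mpr hyb
  have h1c : 1 ≤ Real.cosh y := Real.one_le_cosh y
  have hA : |Real.cos x * (1 - Real.cosh y)| ≤ Real.cosh y₀ - 1 := by
    rw [abs_mul]
    have := Real.abs_cos_le_one x
    have h2 : |1 - Real.cosh y| = Real.cosh y - 1 := by
      rw [abs_of_nonpos (by linarith)]
      ring
    rw [h2]
    nlinarith [abs_nonneg (Real.cos x)]
  have hB : |Real.sin x * Real.sinh y| ≤ Real.sinh y₀ := by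
    rw [abs_mul]
    have h3 := Real.abs_sin_le_one x
    calc |Real.sin x| * |Real.sinh y| ≤ 1 * |Real.sinh y| :=
        mul_le_mul_of_nonneg_right h3 (abs_nonneg _)
      _ = |Real.sinh y| := one_mul _
      _ ≤ Real.sinh y₀ := hsinhy
  have hexpb : Real.cosh y₀ - 1 + Real.sinh y₀ ≤ 2*y₀ := by
    have := Real.cosh_add_sinh y₀
    have h5 := exp_sub_one_le (le_of_lt hy₀) hy₀half
    linarith
  calc ‖((Real.cos x * (1 - Real.cosh y) : ℝ):ℂ)/2
      + ((Real.sin x * Real.sinh y : ℝ):ℂ)/2 * Complex.I‖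
      ≤ |Real.cos x * (1 - Real.cosh y)|/2 + |Real.sin x * Real.sinh y|/2 := hb1
    _ ≤ (Real.cosh y₀ - 1)/2 + Real.sinh y₀/2 := by linarith
    _ ≤ y₀ := by linarith
    _ < η := by
      have : y₀ ≤ η/4 := hy₀η
      linarith

lemma disk_through {Ω : Set E} (hΩo : IsOpen Ω) (hΩc : IsConnected Ω)
    {z w : E} (hz : z ∈ Ω) (hw : w ∈ Ω) :
    ∃ (f : ℂ → E) (l : ℂ), DifferentiableOn ℂ f (ball 0 1) ∧
      MapsTo f (ball 0 1) Ω ∧ f 0 = z ∧ f l = w ∧ l ∈ ball (0:ℂ) 1 := by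
  have hpc : IsPathConnected Ω := hΩo.isConnected_iff_isPathConnected.mp hΩc
  obtain ⟨γ, hγmem⟩ := hpc.joinedIn z hz w hw
  set K : Set E := range (γ : unitInterval → E) with hKdef
  have hKcomp : IsCompact K := isCompact_range γ.continuous
  have hKΩ : K ⊆ Ω := range_subset_iff.mpr hγmem
  obtain ⟨δ, hδ, hthick⟩ := hKcomp.exists_thickening_subset_open hΩo hKΩ
  obtain ⟨n, hn0, happrox⟩ := bernstein_vec γ.continuous (by positivity : (0:ℝ) < δ/16)
  set P : ℂ → E := fun ζ => ∑ k : Fin (n+1),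
    ((n.choose (k:ℕ) : ℂ) * ζ^(k:ℕ) * (1-ζ)^(n-(k:ℕ))) • γ (bernstein.z k) with hPdef
  have hPdiff : Differentiable ℂ P := by
    apply Differentiable.fun_sum
    intro k _
    exact (by fun_prop :
      Differentiable ℂ fun ζ:ℂ => (n.choose (k:ℕ) : ℂ) * ζ^(k:ℕ) * (1-ζ)^(n-(k:ℕ))).smul_const _
  have hPreal : ∀ x : unitInterval, P ((x:ℝ):ℂ)
      = ∑ k : Fin (n+1), bernstein n k x • γ (bernstein.z k) := by
    intro x
    rw [hPdef]
    apply Finset.sum_congr rfl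
    intro k _
    have hc : ((n.choose (k:ℕ) : ℂ) * ((x:ℝ):ℂ)^(k:ℕ) * (1-((x:ℝ):ℂ))^(n-(k:ℕ)))
        = (((bernstein n (k:ℕ) x : ℝ)):ℂ) := by
      rw [bernstein_apply]
      push_cast
      ring
    rw [hc, ← Complex.coe_algebraMap, algebraMap_smul]
  have hPx : ∀ x : unitInterval, ‖P ((x:ℝ):ℂ) - γ x‖ ≤ δ/16 := by
    intro x
    rw [hPreal]
    exact happrox x
  have hP0 : ‖z - P 0‖ ≤ δ/16 := by
    have h := hPx 0
    rw [show (((0:unitInterval):ℝ):ℂ) = 0 by norm_num, γ.source, norm_sub_rev] at h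
    exact h
  have hP1 : ‖w - P 1‖ ≤ δ/16 := by
    have h := hPx 1
    rw [show (((1:unitInterval):ℝ):ℂ) = 1 by norm_num, γ.target, norm_sub_rev] at h
    exact h
  set Q : ℂ → E := fun ζ => P ζ + (1-ζ) • (z - P 0) + ζ • (w - P 1) with hQdef
  have hQdiff : Differentiable ℂ Q := by
    apply Differentiable.add
    apply Differentiable.add hPdiff
    · exact (by fun_prop : Differentiable ℂ fun ζ:ℂ => 1-ζ).smul_const _
    · exact (differentiable_id).smul_const _
  have hQ0 : Q 0 = z := by
    simp only [hQdef, sub_zero, one_smul, zero_smul, add_zero]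
    abel
  have hQ1 : Q 1 = w := by
    simp only [hQdef, sub_self, zero_smul, one_smul, add_zero]
    abel
  have hQP : ∀ ζ : ℂ, ‖ζ‖ ≤ 2 → ‖Q ζ - P ζ‖ ≤ 5*δ/16 := by
    intro ζ hζ
    have e : Q ζ - P ζ = (1-ζ) • (z - P 0) + ζ • (w - P 1) := by
      rw [hQdef]; simp only [add_assoc, add_sub_cancel_left]
    rw [e]
    have h1 : ‖(1-ζ) • (z - P 0)‖ ≤ 3 * (δ/16) := by
      rw [norm_smul]
      have : ‖(1:ℂ)-ζ‖ ≤ 3 := by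
        calc ‖(1:ℂ)-ζ‖ ≤ ‖(1:ℂ)‖ + ‖ζ‖ := norm_sub_le _ _
          _ ≤ 3 := by rw [norm_one]; linarith
      nlinarith [norm_nonneg (z - P 0), norm_nonneg ((1:ℂ)-ζ)]
    have h2 : ‖ζ • (w - P 1)‖ ≤ 2 * (δ/16) := by
      rw [norm_smul]
      nlinarith [norm_nonneg (w - P 1), norm_nonneg ζ]
    calc ‖_ + _‖ ≤ ‖(1-ζ) • (z - P 0)‖ + ‖ζ • (w - P 1)‖ := norm_add_le _ _
      _ ≤ 5*δ/16 := by linarith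
  set I01 : Set ℂ := (fun t : ℝ => (t:ℂ)) '' Icc 0 1 with hI01def
  have hI01comp : IsCompact I01 := isCompact_Icc.image Complex.continuous_ofReal
  set U : Set ℂ := P ⁻¹' (thickening (δ/2) K) with hUdef
  have hUopen : IsOpen U := isOpen_thickening.preimage hPdiff.continuous
  have hI01U : I01 ⊆ U := by
    rintro _ ⟨t, ht, rfl⟩
    show P ((t:ℝ):ℂ) ∈ thickening (δ/2) K
    rw [mem_thickening_iff]
    refine ⟨γ ⟨t, ht⟩, mem_range_self _, ?_⟩
    rw [dist_eq_norm]
    calc ‖P ((t:ℝ):ℂ) - γ ⟨t, ht⟩‖ ≤ δ/16 := hPx ⟨t, ht⟩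
      _ < δ/2 := by linarith
  obtain ⟨η0, hη0, hη0sub⟩ := hI01comp.exists_thickening_subset_open hUopen hI01U
  set η : ℝ := min η0 1 with hηdef
  have hη : 0 < η := lt_min hη0 one_pos
  have hη1 : η ≤ 1 := min_le_right _ _
  have hηsub : thickening η I01 ⊆ U := subset_trans (thickening_mono (min_le_left _ _) _) hη0sub
  obtain ⟨φ, t₁, hφdiff, ht₁0, ht₁1, hφ0, hφ1, hφrange⟩ := strip_map hη
  refine ⟨Q ∘ φ, ((t₁:ℝ):ℂ), ?_, ?_, ?_, ?_, ?_⟩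
  · exact hQdiff.differentiableOn.comp hφdiff (mapsTo_univ _ _)
  · intro s hs
    obtain ⟨u, hu0, hu1, hdist⟩ := hφrange s hs
    have hmem : φ s ∈ thickening η I01 :=
      mem_thickening_iff.mpr ⟨(u:ℂ), ⟨u, ⟨hu0, hu1⟩, rfl⟩, hdist⟩
    have hU : P (φ s) ∈ thickening (δ/2) K := hηsub hmem
    obtain ⟨p, hpK, hpd⟩ := mem_thickening_iff.mp hU
    have hζ2 : ‖φ s‖ ≤ 2 := by
      calc ‖φ s‖ = ‖(φ s - (u:ℂ)) + (u:ℂ)‖ := by rw [sub_add_cancel]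
        _ ≤ ‖φ s - (u:ℂ)‖ + ‖(u:ℂ)‖ := norm_add_le _ _
        _ ≤ 1 + 1 := by
            apply add_le_add
            · rw [← dist_eq_norm]
              exact le_of_lt (lt_of_lt_of_le hdist hη1)
            · rw [Complex.norm_real, Real.norm_eq_abs, abs_of_nonneg hu0]
              exact hu1
        _ = 2 := by norm_num
    have hq := hQP (φ s) hζ2
    apply hthick
    rw [mem_thickening_iff]
    refine ⟨p, hpK, ?_⟩
    calc dist (Q (φ s)) p ≤ dist (Q (φ s)) (P (φ s)) + dist (P (φ s)) p := dist_triangle _ _ _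
      _ < 5*δ/16 + δ/2 := by
          rw [dist_eq_norm]
          exact add_lt_add_of_le_of_lt hq hpd
      _ ≤ δ := by linarith
  · show Q (φ 0) = z
    rw [hφ0, hQ0]
  · show Q (φ ((t₁:ℝ):ℂ)) = w
    rw [hφ1, hQ1]
  · rw [mem_ball_zero_iff, Complex.norm_real, Real.norm_eq_abs, abs_of_pos ht₁0]
    exact ht₁1

lemma disk_connect {Ω : Set E} (hΩo : IsOpen Ω) (hΩc : IsConnected Ω) :
    ∀ z ∈ Ω, ∀ w ∈ Ω, (LSet Ω z w).Nonempty := by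
  intro z hz w hw
  obtain ⟨f, l, hd, hm, h0, hl, hlb⟩ := disk_through hΩo hΩc hz hw
  exact ⟨‖l‖, f, l, hd, hm, h0, hl, hlb, rfl⟩

end HypAux
open HypAux

/-- Theorem 3.1, (b) ⇒ (a): if the Lempert function stays away from `0` as `z → ∞`,
`w → b` for every `b ∈ Ω`, then the unbounded domain `Ω` is hyperbolic. -/
theorem hyperbolic_of_lempert_liminf_pos {E : Type*} [NormedAddCommGroup E]
    [NormedSpace ℂ E] [CompleteSpace E] (Ω : Set E) (hΩo : IsOpen Ω) (hΩc : IsConnected Ω)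
    (hub : ¬ Bornology.IsBounded Ω)
    (hliminf : ∀ b ∈ Ω, ∃ c > (0:ℝ), ∀ᶠ p : E × E in
      (atInfFilter E ⊓ Filter.principal Ω) ×ˢ (nhdsWithin b Ω),
        c ≤ lempert Ω p.1 p.2) :
    IsHyperbolic Ω := by
  have hne := disk_connect hΩo hΩc
  have key : ∀ z ∈ Ω, ∀ ε > 0, ∃ δ > 0, ∀ w ∈ Ω, kobayashi Ω z w < δ → ‖w - z‖ < ε := by
    intro z hz ε hε
    obtain ⟨C, hC, m0, hm0, hbound⟩ := kobayashi_lower hne hz (extract (hliminf z hz))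
    refine ⟨C * min m0 ε, by positivity, fun w hw hk => ?_⟩
    by_contra hge
    push_neg at hge
    have h1 : min m0 ε ≤ min m0 ‖w - z‖ := min_le_min le_rfl hge
    have h2 := hbound w hw
    nlinarith
  refine ⟨?_, key, ?_⟩
  · intro z hz w hw h0
    by_contra hzw
    have hpos : 0 < ‖w - z‖ := norm_pos_iff.mpr (sub_ne_zero.mpr (Ne.symm hzw))
    obtain ⟨δ, hδ, hδ'⟩ := key z hz ‖w - z‖ hpos
    exact absurd (hδ' w hw (by rw [h0]; exact hδ)) (lt_irrefl _)
  · intro z hz ε hε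
    obtain ⟨ρ', hρ', hball⟩ := Metric.isOpen_iff.mp hΩo z hz
    refine ⟨min (ρ'/2) (ρ'*ε/8), by positivity, fun w hw hwz => ?_⟩
    have hwz1 : ‖w - z‖ < ρ' := lt_of_lt_of_le hwz (le_trans (min_le_left _ _) (by linarith))
    have h1 : lempert Ω z w ≤ ‖w - z‖ / ρ' := lempert_le_of_ball hρ' hball hwz1
    have hL0 : 0 ≤ lempert Ω z w := lempert_nonneg _ _ _
    have hL2 : lempert Ω z w ≤ 1/2 := by
      have : ‖w - z‖ / ρ' < 1/2 := by
        rw [div_lt_iff₀ hρ']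
        calc ‖w - z‖ < min (ρ'/2) (ρ'*ε/8) := hwz
          _ ≤ ρ'/2 := min_le_left _ _
          _ = 1/2 * ρ' := by ring
      linarith
    have h3 := kobayashi_le_poincare hz hw
    have h4 := poincare_le hL0 hL2
    have h5 : lempert Ω z w < ε/4 := by
      have : ‖w - z‖ / ρ' < ε/4 := by
        rw [div_lt_iff₀ hρ']
        calc ‖w - z‖ < min (ρ'/2) (ρ'*ε/8) := hwz
          _ ≤ ρ'*ε/8 := min_le_right _ _
          _ ≤ ε/4 * ρ' := by ring_nf; nlinarith
      linarith
    calc kobayashi Ω z w ≤ poincareDist (lempert Ω z w) := h3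
      _ ≤ 2 * lempert Ω z w := h4
      _ < 2 * (ε/4) := by linarith
      _ < ε := by linarith
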